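/- Let p, q be coprime positive integers with pq | n. In the polynomial ring ℂ[z_0,...,z_{n_p - 1}, w_0,...,w_{n_q - 1}], consider the ring homomorphism ρ' to ℂ[x_0,...,x_{n-1}] sending z_i ↦ Θ_p(y^(p)_i) and w_j ↦ Θ_q(y^(q)_j). Then Ker(ρ') is the ideal generated by t_i := Π_{j=0}^{q-1} z_{i + n_{pq} j} − Π_{j=0}^{p-1} w_{i + n_{pq} j} for 0 ≤ i ≤ n_{pq} − 1. -/

import Mathlib

open MvPolynomial
open Fin.NatCast

/-- The variable `y^(d)_{i,j} = ∑_{l<n/d} ζ^{i(j+dl)} x_{j+dl}`. -/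
noncomputable def ypVar (n d : ℕ) [NeZero n] (ζ : ℂ) (i j : ℕ) :
    MvPolynomial (ZMod n) ℂ :=
  ∑ l ∈ Finset.range (n / d), C (ζ ^ (i * (j + d * l))) * X ((j + d * l : ℕ) : ZMod n)

/-- The circulant determinant of order `d` with first column `a_0, …, a_{d-1}`. -/
def thetaCirc {R : Type*} [CommRing R] (d : ℕ) (a : ℕ → R) : R :=
  (Matrix.circulant fun j : Fin d => a (j : ℕ)).det

open Finset

namespace Stmt15Aux

@[to_additive sum_range_mul_eq]
theorem prod_range_mul_eq {M : Type*} [CommMonoid M] (d e : ℕ) (hd : 0 < d)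
    (f : ℕ → M) :
    ∏ t ∈ range (d * e), f t = ∏ j ∈ range d, ∏ l ∈ range e, f (j + d * l) := by
  rw [← Finset.prod_product']
  apply Finset.prod_nbij' (fun t => (t % d, t / d)) (fun x => x.1 + d * x.2)
  · intro t ht
    simp only [Finset.mem_range, Finset.mem_product] at *
    exact ⟨Nat.mod_lt _ hd, Nat.div_lt_iff_lt_mul hd |>.mpr (by
      calc t < d * e := ht
      _ ≤ e * d := by ring_nf; exact le_rfl)⟩
  · intro x hx
    simp only [Finset.mem_range, Finset.mem_product] at *
    obtain ⟨h1, h2⟩ := hx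
    calc x.1 + d * x.2 < d + d * x.2 := by omega
      _ ≤ d * e := by nlinarith
  · intro t ht; simp [Nat.mod_add_div]
  · intro x hx
    simp only [Finset.mem_range, Finset.mem_product] at hx
    obtain ⟨h1, h2⟩ := hx
    simp [Nat.add_mul_mod_self_left, Nat.mod_eq_of_lt h1,
      Nat.add_mul_div_left _ _ hd, Nat.div_eq_of_lt h1]
  · intro t ht; simp [Nat.mod_add_div]

theorem geom_sum_zero {z : ℂ} {m : ℕ} (hm : z ^ m = 1) (hz : z ≠ 1) :
    ∑ t ∈ range m, z ^ t = 0 := by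
  rw [geom_sum_eq hz, hm, sub_self, zero_div]

end Stmt15Aux

namespace Stmt15Aux2
open Stmt15Aux

/-- The linear form `u_k = ∑_{t<n} ζ^{kt} x_t`. -/
noncomputable def u (n : ℕ) [NeZero n] (ζ : ℂ) (k : ℕ) : MvPolynomial (ZMod n) ℂ :=
  ∑ t ∈ Finset.range n, C (ζ ^ (k * t)) * X ((t : ℕ) : ZMod n)

variable {n : ℕ} [NeZero n] {ζ : ℂ}

omit [NeZero n] in
theorem pow_mod (hζ : IsPrimitiveRoot ζ n) (x : ℕ) : ζ ^ (x % n) = ζ ^ x := by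
  conv_rhs => rw [← Nat.mod_add_div x n, pow_add, pow_mul, hζ.pow_eq_one, one_pow, mul_one]

theorem orth (hζ : IsPrimitiveRoot ζ n) {k m : ℕ} (hm : m < n) :
    ∑ t ∈ Finset.range n, ζ ^ (k * t) * (ζ⁻¹) ^ (m * t) = if k % n = m then (n : ℂ) else 0 := by
  have hne : ζ ≠ 0 := hζ.ne_zero (NeZero.ne n)
  have hw : ∀ t, ζ ^ (k * t) * (ζ⁻¹) ^ (m * t) = (ζ ^ k * (ζ⁻¹) ^ m) ^ t := by
    intro t; rw [mul_pow, ← pow_mul, ← pow_mul]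
  simp only [hw]
  have hwn : (ζ ^ k * (ζ⁻¹) ^ m) ^ n = 1 := by
    rw [mul_pow, ← pow_mul, ← pow_mul, mul_comm k n, mul_comm m n, pow_mul, pow_mul,
      hζ.pow_eq_one, inv_pow, hζ.pow_eq_one, one_pow, inv_one, one_pow, one_mul]
  by_cases h : k % n = m
  · subst h
    have h1 : ζ ^ k * (ζ⁻¹) ^ (k % n) = 1 := by
      rw [← pow_mod hζ k, ← mul_pow]
      rw [mul_inv_cancel₀ hne, one_pow]
    simp only [← inv_pow, h1, one_pow]
    simp
  · rw [if_neg h]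
    apply geom_sum_zero hwn
    intro hcon
    apply h
    have h3 : ζ ^ (k % n) = ζ ^ m := by
      have h2 : ζ ^ k * (ζ⁻¹) ^ m * ζ ^ m = ζ ^ m := by rw [hcon, one_mul]
      rw [mul_assoc, inv_pow, inv_mul_cancel₀ (pow_ne_zero _ hne), mul_one] at h2
      rw [pow_mod hζ, h2]
    exact hζ.pow_inj (Nat.mod_lt _ (Nat.pos_of_ne_zero (NeZero.ne n))) hm h3

/-- The substitution `x_k ↦ u_k`, as an algebra endomorphism. -/
noncomputable def Etr (n : ℕ) [NeZero n] (ζ : ℂ) :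
    MvPolynomial (ZMod n) ℂ →ₐ[ℂ] MvPolynomial (ZMod n) ℂ :=
  aeval (fun k : ZMod n => u n ζ k.val)

/-- The inverse substitution. -/
noncomputable def Ltr (n : ℕ) [NeZero n] (ζ : ℂ) :
    MvPolynomial (ZMod n) ℂ →ₐ[ℂ] MvPolynomial (ZMod n) ℂ :=
  aeval (fun t : ZMod n =>
    C ((n : ℂ)⁻¹) * ∑ m ∈ Finset.range n, C ((ζ⁻¹) ^ (m * t.val)) * X ((m : ℕ) : ZMod n))

theorem Ltr_u (hζ : IsPrimitiveRoot ζ n) (k : ℕ) :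
    Ltr n ζ (u n ζ k) = X ((k : ℕ) : ZMod n) := by
  have hn0 : (n : ℂ) ≠ 0 := Nat.cast_ne_zero.mpr (NeZero.ne n)
  rw [u, map_sum]
  have hstep : ∀ t ∈ Finset.range n,
      Ltr n ζ (C (ζ ^ (k * t)) * X ((t : ℕ) : ZMod n))
      = C ((n:ℂ)⁻¹) * ∑ m ∈ Finset.range n,
          C (ζ ^ (k * t) * (ζ⁻¹) ^ (m * t)) * X ((m : ℕ) : ZMod n) := by
    intro t ht
    rw [Finset.mem_range] at ht
    rw [map_mul, Ltr, aeval_C, aeval_X, ZMod.val_natCast, Nat.mod_eq_of_lt ht]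
    rw [Finset.mul_sum, Finset.mul_sum, Finset.mul_sum]
    apply Finset.sum_congr rfl
    intro m hm
    rw [C_mul]
    simp only [MvPolynomial.algebraMap_eq]
    ring
  rw [Finset.sum_congr rfl hstep, ← Finset.mul_sum, Finset.sum_comm]
  have h4 : ∀ m ∈ Finset.range n,
      ∑ t ∈ Finset.range n, C (ζ ^ (k * t) * (ζ⁻¹) ^ (m * t)) * X ((m:ℕ) : ZMod n)
      = C (if k % n = m then (n : ℂ) else 0) * X ((m:ℕ) : ZMod n) := by
    intro m hm
    rw [Finset.mem_range] at hm
    rw [← Finset.sum_mul, ← map_sum C, orth hζ hm]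
  rw [Finset.sum_congr rfl h4]
  have h5 : ∀ m ∈ Finset.range n,
      C (if k % n = m then (n : ℂ) else 0) * X ((m:ℕ) : ZMod n)
      = if k % n = m then C (n : ℂ) * X ((m:ℕ) : ZMod n) else 0 := by
    intro m hm
    split <;> simp
  rw [Finset.sum_congr rfl h5, Finset.sum_ite_eq (Finset.range n) (k % n)]
  rw [if_pos (Finset.mem_range.mpr (Nat.mod_lt _ (Nat.pos_of_ne_zero (NeZero.ne n))))]
  rw [← mul_assoc, ← C_mul, inv_mul_cancel₀ hn0, C_1, one_mul, ZMod.natCast_mod]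

theorem Etr_injective (hζ : IsPrimitiveRoot ζ n) : Function.Injective (Etr n ζ) := by
  have hcomp : (Ltr n ζ).comp (Etr n ζ) = AlgHom.id ℂ _ := by
    apply MvPolynomial.algHom_ext
    intro k
    rw [AlgHom.comp_apply, Etr, aeval_X, Ltr_u hζ, AlgHom.id_apply, ZMod.natCast_val,
      ZMod.cast_id]
  intro a b hab
  have h := congrArg (Ltr n ζ) hab
  rwa [← AlgHom.comp_apply, ← AlgHom.comp_apply, hcomp, AlgHom.id_apply, AlgHom.id_apply] at h

end Stmt15Aux2

namespace Stmt15Aux3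
open Stmt15Aux Stmt15Aux2

theorem pow_mod_mul {z : ℂ} {d : ℕ} (hz : z ^ d = 1) (x y : ℕ) :
    z ^ (x % d * y) = z ^ (x * y) := by
  conv_rhs => rw [← Nat.mod_add_div x d, add_mul, pow_add, mul_assoc,
    pow_mul z d, hz, one_pow, mul_one]

variable {n : ℕ} [NeZero n] {ζ : ℂ}

theorem lam_eq (hζ : IsPrimitiveRoot ζ n) {d : ℕ} (hd : 0 < d) (hdvd : d ∣ n)
    (i m : ℕ) :
    ∑ j ∈ range d, C ((ζ ^ (n / d)) ^ (j * m)) * ypVar n d ζ i j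
      = u n ζ (i + n / d * m) := by
  have hed : d * (n / d) = n := Nat.mul_div_cancel' hdvd
  rw [u, show range n = range (d * (n / d)) from by rw [hed],
    sum_range_mul_eq d (n / d) hd]
  apply Finset.sum_congr rfl
  intro j hj
  rw [ypVar, Finset.mul_sum]
  apply Finset.sum_congr rfl
  intro l hl
  rw [← mul_assoc, ← C_mul]
  congr 2
  have hexp : (i + n / d * m) * (j + d * l)
      = i * (j + d * l) + n / d * (j * m) + n / d * d * (m * l) := by ring
  rw [hexp, pow_add, pow_add, ← pow_mul ζ (n / d) (j * m)]
  have h1 : ζ ^ (n / d * d * (m * l)) = 1 := by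
    rw [mul_comm (n / d) d, hed, pow_mul, hζ.pow_eq_one, one_pow]
  rw [h1, mul_one, mul_comm]

theorem theta_eq (hζ : IsPrimitiveRoot ζ n) {d : ℕ} (hd : 0 < d) (hdvd : d ∣ n)
    (i : ℕ) :
    thetaCirc d (fun j => ypVar n d ζ i j) = ∏ m ∈ range d, u n ζ (i + n / d * m) := by
  haveI : NeZero d := ⟨hd.ne'⟩
  have hed : d * (n / d) = n := Nat.mul_div_cancel' hdvd
  set ω : ℂ := ζ ^ (n / d) with hω
  have hωprim : IsPrimitiveRoot ω d := hζ.pow (Nat.pos_of_ne_zero (NeZero.ne n))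
    (by rw [mul_comm]; exact hed.symm)
  have hωbprim : IsPrimitiveRoot ω⁻¹ d := hωprim.inv
  have hωb1 : (ω⁻¹) ^ d = 1 := hωbprim.pow_eq_one
  set A := MvPolynomial (ZMod n) ℂ
  set Cm : Matrix (Fin d) (Fin d) A :=
    Matrix.circulant (fun j : Fin d => ypVar n d ζ i (j : ℕ)) with hCm
  set Vc : Matrix (Fin d) (Fin d) ℂ := Matrix.vandermonde (fun k : Fin d => (ω⁻¹) ^ (k : ℕ))
    with hVc
  set V : Matrix (Fin d) (Fin d) A := Vc.map (C : ℂ → A) with hV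
  have hVentry : ∀ k m : Fin d, V k m = C ((ω⁻¹) ^ ((k : ℕ) * (m : ℕ))) := by
    intro k m
    simp [hV, hVc, Matrix.vandermonde, ← pow_mul]
  set lam : Fin d → A := fun m => u n ζ (i + n / d * (m : ℕ)) with hlam
  have hlam2 : ∀ m : Fin d, ∑ j : Fin d, C (ω ^ ((j : ℕ) * (m : ℕ))) * ypVar n d ζ i (j : ℕ)
      = lam m := by
    intro m
    rw [Fin.sum_univ_eq_sum_range (fun j => C (ω ^ (j * (m : ℕ))) * ypVar n d ζ i j) d]
    exact lam_eq hζ hd hdvd i (m : ℕ)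
  have hmain : Cm * V = V * Matrix.diagonal lam := by
    refine Matrix.ext fun k m => ?_
    rw [Matrix.mul_apply, Matrix.mul_diagonal]
    have hre : ∑ j : Fin d, Cm k j * V j m = ∑ j : Fin d, Cm k (k - j) * V (k - j) m :=
      ((Equiv.subLeft k).sum_comp (fun j => Cm k j * V j m)).symm
    rw [hre]
    have hterm : ∀ j : Fin d, Cm k (k - j) * V (k - j) m
        = C ((ω⁻¹) ^ ((k : ℕ) * (m : ℕ)))
          * (C (ω ^ ((j : ℕ) * (m : ℕ))) * ypVar n d ζ i (j : ℕ)) := by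
      intro j
      rw [hVentry]
      have hsub : (k - (k - j) : Fin d) = j := sub_sub_cancel k j
      rw [hCm, Matrix.circulant_apply, hsub]
      have hval : ((k - j : Fin d) : ℕ) = ((d - (j : ℕ)) + (k : ℕ)) % d := by
        rw [Fin.sub_def]
      rw [hval]
      have hc : (ω⁻¹) ^ ((((d - (j : ℕ)) + (k : ℕ)) % d) * (m : ℕ))
          = (ω⁻¹) ^ ((k : ℕ) * (m : ℕ)) * ω ^ ((j : ℕ) * (m : ℕ)) := by
        rw [pow_mod_mul hωb1, add_mul, pow_add, mul_comm]
        congr 1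
        have hjd : (j : ℕ) ≤ d := le_of_lt j.isLt
        have h1 : (ω⁻¹) ^ ((d - (j : ℕ)) * (m : ℕ)) * (ω⁻¹) ^ ((j : ℕ) * (m : ℕ)) = 1 := by
          rw [← pow_add, ← add_mul, Nat.sub_add_cancel hjd, mul_comm d (m : ℕ), pow_mul',
            hωb1, one_pow]
        calc (ω⁻¹) ^ ((d - (j : ℕ)) * (m : ℕ))
            = ((ω⁻¹) ^ ((j : ℕ) * (m : ℕ)))⁻¹ := eq_inv_of_mul_eq_one_left h1
          _ = ω ^ ((j : ℕ) * (m : ℕ)) := by rw [inv_pow, inv_inv]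
      rw [hc, C_mul]
      ring
    rw [Finset.sum_congr rfl (fun j _ => hterm j), ← Finset.mul_sum, hVentry, hlam2]
  have hdet : Cm.det * V.det = V.det * ∏ m : Fin d, lam m := by
    rw [← Matrix.det_mul, hmain, Matrix.det_mul, Matrix.det_diagonal]
  have hVdet : V.det = C Vc.det := ((C : ℂ →+* A).map_det Vc).symm
  have hVcne : Vc.det ≠ 0 := by
    rw [hVc, Matrix.det_vandermonde]
    apply Finset.prod_ne_zero_iff.mpr
    intro a _
    apply Finset.prod_ne_zero_iff.mpr
    intro b hb
    rw [Finset.mem_Ioi] at hb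
    intro hcon
    rw [sub_eq_zero] at hcon
    exact absurd (Fin.val_injective (hωbprim.pow_inj b.isLt a.isLt hcon)) (ne_of_gt hb)
  have hCne : (C Vc.det : A) ≠ 0 := by
    intro hcon
    exact hVcne (C_injective (ZMod n) ℂ (by rw [hcon, map_zero]))
  have hcan : C Vc.det * Cm.det = C Vc.det * ∏ m : Fin d, lam m := by
    rw [mul_comm (C Vc.det) Cm.det, ← hVdet, hdet, hVdet]
  have hfin := mul_left_cancel₀ hCne hcan
  rw [thetaCirc, hfin, hlam]
  exact Fin.prod_univ_eq_prod_range (fun m => u n ζ (i + n / d * m)) d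

end Stmt15Aux3

namespace Stmt15Aux4

/-- counting lemma: among `i + e*j`, `j < d`, exactly one equals `Y` iff `Y % e = i`. -/
theorem count_eq (e d i Y : ℕ) (hd : 0 < d) (he : 0 < e) (hi : i < e) (hY : Y < e * d) :
    ∑ j ∈ range d, (if i + e * j = Y then 1 else 0) = if Y % e = i then 1 else 0 := by
  by_cases hx : Y % e = i
  · rw [if_pos hx]
    have hj0 : Y / e < d := Nat.div_lt_iff_lt_mul he |>.mpr (by rwa [mul_comm])
    rw [Finset.sum_eq_single_of_mem (Y / e) (Finset.mem_range.mpr hj0)]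
    · rw [if_pos]
      conv_rhs => rw [← Nat.div_add_mod Y e]
      omega
    · intro b _ hbne
      rw [if_neg]
      intro hcon
      have hY2 : Y = e * (Y / e) + Y % e := (Nat.div_add_mod Y e).symm
      have : e * b = e * (Y / e) := by omega
      exact hbne (Nat.eq_of_mul_eq_mul_left he this)
  · rw [if_neg hx]
    apply Finset.sum_eq_zero
    intro j _
    rw [if_neg]
    intro hcon
    apply hx
    rw [← hcon, Nat.add_mul_mod_self_left, Nat.mod_eq_of_lt hi]

/-- products of variables are monomials -/
theorem prod_monomial_one {S S' : Type*} (s : Finset S') (f : S' → (S →₀ ℕ)) :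
    ∏ x ∈ s, (monomial (f x) (1 : ℂ) : MvPolynomial S ℂ)
      = monomial (∑ x ∈ s, f x) 1 := by
  classical
  induction s using Finset.cons_induction with
  | empty => simp [monomial_zero']
  | cons a s ha ih =>
      rw [Finset.prod_cons, Finset.sum_cons, ih, monomial_mul, one_mul]

theorem X_eq_monomial {S : Type*} (v : S) :
    (X v : MvPolynomial S ℂ) = monomial (Finsupp.single v 1) 1 := by
  rw [← pow_one (X v : MvPolynomial S ℂ), X_pow_eq_monomial]

theorem prod_X_eq_monomial {S S' : Type*} (s : Finset S') (g : S' → S) :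
    ∏ x ∈ s, (X (g x) : MvPolynomial S ℂ)
      = monomial (∑ x ∈ s, Finsupp.single (g x) 1) 1 := by
  simp_rw [X_eq_monomial]
  exact prod_monomial_one s _

end Stmt15Aux4

namespace Stmt15Aux4

section Main

variable (n p q N np nq : ℕ) [NeZero n] [NeZero np] [NeZero nq]

/-- exponent vectors of the images of the variables -/
noncomputable def ev : Fin np ⊕ Fin nq → (ZMod n →₀ ℕ) :=
  Sum.elim
    (fun i => ∑ m ∈ range p, Finsupp.single (((i : ℕ) + np * m : ℕ) : ZMod n) 1)
    (fun j => ∑ m ∈ range q, Finsupp.single (((j : ℕ) + nq * m : ℕ) : ZMod n) 1)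

/-- the monomial map -/
noncomputable def psim : Fin np ⊕ Fin nq → MvPolynomial (ZMod n) ℂ :=
  Sum.elim
    (fun i => ∏ m ∈ range p, X (((i : ℕ) + np * m : ℕ) : ZMod n))
    (fun j => ∏ m ∈ range q, X (((j : ℕ) + nq * m : ℕ) : ZMod n))

theorem psim_eq (v : Fin np ⊕ Fin nq) :
    psim n p q np nq v = monomial (ev n p q np nq v) 1 := by
  cases v with
  | inl i =>
      show ∏ m ∈ range p, (X ((((i:ℕ) + np * m : ℕ)) : ZMod n) : MvPolynomial (ZMod n) ℂ) = _
      rw [prod_X_eq_monomial]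
      rfl
  | inr j =>
      show ∏ m ∈ range q, (X ((((j:ℕ) + nq * m : ℕ)) : ZMod n) : MvPolynomial (ZMod n) ℂ) = _
      rw [prod_X_eq_monomial]
      rfl

/-- the exponent vector of the image of a monomial -/
noncomputable def cExp (σ : (Fin np ⊕ Fin nq) →₀ ℕ) : ZMod n →₀ ℕ :=
  σ.sum fun v k => k • ev n p q np nq v

theorem aeval_psim_monomial (σ : (Fin np ⊕ Fin nq) →₀ ℕ) (c : ℂ) :
    aeval (psim n p q np nq) (monomial σ c) = monomial (cExp n p q np nq σ) c := by
  rw [aeval_monomial, MvPolynomial.algebraMap_eq]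
  have h1 : σ.prod (fun v k => psim n p q np nq v ^ k)
      = monomial (cExp n p q np nq σ) 1 := by
    rw [Finsupp.prod, cExp, Finsupp.sum, ← prod_monomial_one]
    apply Finset.prod_congr rfl
    intro v _
    rw [psim_eq, monomial_pow, one_pow]
  rw [h1, C_mul_monomial, mul_one]

/-- the key evaluation of a single block of `ev` -/
theorem ev_block_apply (d e : ℕ) (hd : 0 < d) (hed : e * d = n) (i : ℕ) (hi : i < e)
    (x : ℕ) :
    (∑ m ∈ range d, Finsupp.single (((i + e * m : ℕ)) : ZMod n) (1 : ℕ))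
        ((x : ℕ) : ZMod n)
      = if x % e = i then 1 else 0 := by
  have hn0 : 0 < n := Nat.pos_of_ne_zero (NeZero.ne n)
  have he : 0 < e := by
    rcases Nat.eq_zero_or_pos e with h | h
    · rw [h, zero_mul] at hed; omega
    · exact h
  rw [Finsupp.finset_sum_apply]
  have hcond : ∀ m ∈ range d, (Finsupp.single (((i + e * m : ℕ)) : ZMod n) (1:ℕ))
      ((x : ℕ) : ZMod n) = if i + e * m = x % n then 1 else 0 := by
    intro m hm
    have hm' : m < d := Finset.mem_range.mp hm
    have hbound : i + e * m < n := by
      calc i + e * m < e + e * m := by omega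
        _ = e * (m + 1) := by ring
        _ ≤ e * d := Nat.mul_le_mul_left e hm'
        _ = n := hed
    rw [Finsupp.single_apply]
    congr 1
    rw [eq_iff_iff, ZMod.natCast_eq_natCast_iff]
    show (i + e * m) % n = x % n ↔ _
    rw [Nat.mod_eq_of_lt hbound]
  rw [Finset.sum_congr rfl hcond, count_eq e d i (x % n) hd he hi
    (by rw [hed]; exact Nat.mod_lt _ hn0), Nat.mod_mod_of_dvd x ⟨d, hed.symm⟩]

theorem cExp_apply (hp : 0 < p) (hq : 0 < q) (hnpp : np * p = n) (hnqq : nq * q = n)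
    (σ : (Fin np ⊕ Fin nq) →₀ ℕ) (x : ℕ) :
    cExp n p q np nq σ ((x : ℕ) : ZMod n)
      = σ (Sum.inl ((x : Fin np))) + σ (Sum.inr ((x : Fin nq))) := by
  classical
  rw [cExp, Finsupp.sum, Finsupp.finset_sum_apply]
  have hterm : ∀ v, (σ v • ev n p q np nq v) ((x : ℕ) : ZMod n)
      = (if v = Sum.inl ((x : Fin np)) then σ v else 0)
      + (if v = Sum.inr ((x : Fin nq)) then σ v else 0) := by
    intro v
    rw [Finsupp.smul_apply, smul_eq_mul]
    cases v with
    | inl i =>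
        have hev : ev n p q np nq (Sum.inl i)
            = ∑ m ∈ range p, Finsupp.single ((((i : ℕ) + np * m : ℕ)) : ZMod n) 1 := rfl
        rw [hev, ev_block_apply n p np hp hnpp (i : ℕ) i.isLt x]
        by_cases h : x % np = (i : ℕ)
        · have hfin : ((x : Fin np)) = i := Fin.ext (by rw [Fin.val_natCast]; exact h)
          simp [h, hfin]
        · have hfin : ¬ ((Sum.inl i : Fin np ⊕ Fin nq) = Sum.inl ((x : Fin np))) := by
            intro hcon
            apply h
            rw [Sum.inl.inj hcon, Fin.val_natCast]
          simp [h, hfin]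
    | inr j =>
        have hev : ev n p q np nq (Sum.inr j)
            = ∑ m ∈ range q, Finsupp.single ((((j : ℕ) + nq * m : ℕ)) : ZMod n) 1 := rfl
        rw [hev, ev_block_apply n q nq hq hnqq (j : ℕ) j.isLt x]
        by_cases h : x % nq = (j : ℕ)
        · have hfin : ((x : Fin nq)) = j := Fin.ext (by rw [Fin.val_natCast]; exact h)
          simp [h, hfin]
        · have hfin : ¬ ((Sum.inr j : Fin np ⊕ Fin nq) = Sum.inr ((x : Fin nq))) := by
            intro hcon
            apply h
            rw [Sum.inr.inj hcon, Fin.val_natCast]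
          simp [h, hfin]
  rw [Finset.sum_congr rfl (fun v _ => hterm v), Finset.sum_add_distrib]
  congr 1
  · rw [Finset.sum_ite_eq' σ.support (Sum.inl ((x : Fin np))) σ]
    by_cases hmem : (Sum.inl ((x : Fin np)) : Fin np ⊕ Fin nq) ∈ σ.support
    · rw [if_pos hmem]
    · rw [if_neg hmem, eq_comm, Finsupp.notMem_support_iff.mp hmem]
  · rw [Finset.sum_ite_eq' σ.support (Sum.inr ((x : Fin nq))) σ]
    by_cases hmem : (Sum.inr ((x : Fin nq)) : Fin np ⊕ Fin nq) ∈ σ.support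
    · rw [if_pos hmem]
    · rw [if_neg hmem, eq_comm, Finsupp.notMem_support_iff.mp hmem]

/-- A monomial exponent is *normal* if in every `z`-cycle some exponent vanishes. -/
def normal (σ : (Fin np ⊕ Fin nq) →₀ ℕ) : Prop :=
  ∀ i < N, ∃ j < q, σ (Sum.inl ((i + N * j : ℕ) : Fin np)) = 0

theorem cExp_inj (hp : 0 < p) (hq : 0 < q) (hco : Nat.Coprime p q) (hN : 0 < N)
    (hnp : np = N * q) (hnq : nq = N * p) (hnpp : np * p = n) (hnqq : nq * q = n)
    {σ σ' : (Fin np ⊕ Fin nq) →₀ ℕ}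
    (hσ : normal q N np nq σ) (hσ' : normal q N np nq σ')
    (h : cExp n p q np nq σ = cExp n p q np nq σ') : σ = σ' := by
  have hx : ∀ x : ℕ, σ (Sum.inl ((x : Fin np))) + σ (Sum.inr ((x : Fin nq)))
      = σ' (Sum.inl ((x : Fin np))) + σ' (Sum.inr ((x : Fin nq))) := by
    intro x
    rw [← cExp_apply n p q np nq hp hq hnpp hnqq σ x, h,
      cExp_apply n p q np nq hp hq hnpp hnqq σ' x]
  have key : ∀ r < N, ∀ α < q, ∀ β < p,
      σ (Sum.inl ((r + N * α : ℕ) : Fin np)) + σ (Sum.inr ((r + N * β : ℕ) : Fin nq))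
      = σ' (Sum.inl ((r + N * α : ℕ) : Fin np)) + σ' (Sum.inr ((r + N * β : ℕ) : Fin nq)) := by
    intro r hr α hα β hβ
    obtain ⟨s, hsp, hsq⟩ := Nat.chineseRemainder hco β α
    have hmodq : s % q = α := by
      have := hsq; unfold Nat.ModEq at this; rw [this, Nat.mod_eq_of_lt hα]
    have hmodp : s % p = β := by
      have := hsp; unfold Nat.ModEq at this; rw [this, Nat.mod_eq_of_lt hβ]
    have hs : s = q * (s / q) + s % q := (Nat.div_add_mod s q).symm
    have hs' : s = p * (s / p) + s % p := (Nat.div_add_mod s p).symm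
    have hltα : r + N * α < N * q := by
      calc r + N * α < N + N * α := by omega
        _ = N * (α + 1) := by ring
        _ ≤ N * q := Nat.mul_le_mul_left N hα
    have hltβ : r + N * β < N * p := by
      calc r + N * β < N + N * β := by omega
        _ = N * (β + 1) := by ring
        _ ≤ N * p := Nat.mul_le_mul_left N hβ
    have h1 : (r + N * s) % np = r + N * α := by
      rw [hnp]
      have heq : r + N * s = (r + N * (s % q)) + (N * q) * (s / q) := by
        conv_lhs => rw [hs]
        ring
      rw [heq, Nat.add_mul_mod_self_left, hmodq, Nat.mod_eq_of_lt hltα]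
    have h2 : (r + N * s) % nq = r + N * β := by
      rw [hnq]
      have heq : r + N * s = (r + N * (s % p)) + (N * p) * (s / p) := by
        conv_lhs => rw [hs']
        ring
      rw [heq, Nat.add_mul_mod_self_left, hmodp, Nat.mod_eq_of_lt hltβ]
    have e1 : ((r + N * s : ℕ) : Fin np) = ((r + N * α : ℕ) : Fin np) := by
      apply Fin.ext
      rw [Fin.val_natCast, Fin.val_natCast, h1, Nat.mod_eq_of_lt (by rw [hnp]; exact hltα)]
    have e2 : ((r + N * s : ℕ) : Fin nq) = ((r + N * β : ℕ) : Fin nq) := by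
      apply Fin.ext
      rw [Fin.val_natCast, Fin.val_natCast, h2, Nat.mod_eq_of_lt (by rw [hnq]; exact hltβ)]
    have hxx := hx (r + N * s)
    rwa [e1, e2] at hxx
  have hblock : ∀ r < N,
      (∀ α < q, σ (Sum.inl ((r + N * α : ℕ) : Fin np)) = σ' (Sum.inl ((r + N * α : ℕ) : Fin np)))
      ∧ (∀ β < p, σ (Sum.inr ((r + N * β : ℕ) : Fin nq)) = σ' (Sum.inr ((r + N * β : ℕ) : Fin nq))) := by
    intro r hr
    obtain ⟨α0, hα0, hA0⟩ := hσ r hr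
    obtain ⟨α1, hα1, hA1⟩ := hσ' r hr
    have hB : ∀ β < p, σ (Sum.inr ((r + N * β : ℕ) : Fin nq))
        = σ' (Sum.inr ((r + N * β : ℕ) : Fin nq)) := by
      intro β hβ
      have k0 := key r hr α0 hα0 β hβ
      have k1 := key r hr α1 hα1 β hβ
      omega
    refine ⟨?_, hB⟩
    intro α hα
    have k := key r hr α hα 0 hp
    have b0 := hB 0 hp
    omega
  apply Finsupp.ext
  rintro (i | j)
  · have hr : (i : ℕ) % N < N := Nat.mod_lt _ hN
    have hα : (i : ℕ) / N < q := (Nat.div_lt_iff_lt_mul hN).mpr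
      (by rw [mul_comm, ← hnp]; exact i.isLt)
    have hb := (hblock ((i : ℕ) % N) hr).1 ((i : ℕ) / N) hα
    have hi2 : ((i : ℕ) % N + N * ((i : ℕ) / N) : ℕ) = (i : ℕ) := Nat.mod_add_div _ _
    rwa [hi2, Fin.cast_val_eq_self] at hb
  · have hr : (j : ℕ) % N < N := Nat.mod_lt _ hN
    have hβ : (j : ℕ) / N < p := (Nat.div_lt_iff_lt_mul hN).mpr
      (by rw [mul_comm, ← hnq]; exact j.isLt)
    have hb := (hblock ((j : ℕ) % N) hr).2 ((j : ℕ) / N) hβ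
    have hj2 : ((j : ℕ) % N + N * ((j : ℕ) / N) : ℕ) = (j : ℕ) := Nat.mod_add_div _ _
    rwa [hj2, Fin.cast_val_eq_self] at hb

/-- `z`-cycle exponent vector -/
noncomputable def Zc (i : ℕ) : (Fin np ⊕ Fin nq) →₀ ℕ :=
  ∑ j ∈ range q, Finsupp.single (Sum.inl ((i + N * j : ℕ) : Fin np)) 1

/-- `w`-cycle exponent vector -/
noncomputable def Wc (i : ℕ) : (Fin np ⊕ Fin nq) →₀ ℕ :=
  ∑ j ∈ range p, Finsupp.single (Sum.inr ((i + N * j : ℕ) : Fin nq)) 1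

/-- the binomial generators -/
noncomputable def tGen (i : ℕ) : MvPolynomial (Fin np ⊕ Fin nq) ℂ :=
  monomial (Zc q N np nq i) 1 - monomial (Wc p N np nq i) 1

/-- total degree in the `z`-variables -/
def Mz (σ : (Fin np ⊕ Fin nq) →₀ ℕ) : ℕ := ∑ v : Fin np, σ (Sum.inl v)

theorem Mz_add (σ τ : (Fin np ⊕ Fin nq) →₀ ℕ) :
    Mz np nq (σ + τ) = Mz np nq σ + Mz np nq τ := by
  simp [Mz, Finsupp.add_apply, Finset.sum_add_distrib]

theorem Wc_inl (i : ℕ) (v : Fin np) : Wc p N np nq i (Sum.inl v) = 0 := by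
  rw [Wc, Finsupp.finset_sum_apply]
  apply Finset.sum_eq_zero
  intro j _
  simp [Finsupp.single_apply]

theorem Mz_Wc (i : ℕ) : Mz np nq (Wc p N np nq i) = 0 := by
  rw [Mz]
  apply Finset.sum_eq_zero
  intro v _
  exact Wc_inl p N np nq i v

theorem Mz_Zc_pos (hq : 0 < q) (i : ℕ) : 0 < Mz np nq (Zc q N np nq i) := by
  have h1 : (1 : ℕ) ≤ Zc q N np nq i (Sum.inl ((i + N * 0 : ℕ) : Fin np)) := by
    rw [Zc, Finsupp.finset_sum_apply]
    refine le_trans ?_ (Finset.single_le_sum (f := fun j =>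
      (Finsupp.single (Sum.inl ((i + N * j : ℕ) : Fin np) : Fin np ⊕ Fin nq) 1)
        (Sum.inl ((i + N * 0 : ℕ) : Fin np))) (fun _ _ => Nat.zero_le _)
      (Finset.mem_range.mpr hq))
    simp [Finsupp.single_apply]
  calc 0 < 1 := Nat.one_pos
    _ ≤ Zc q N np nq i (Sum.inl ((i + N * 0 : ℕ) : Fin np)) := h1
    _ ≤ Mz np nq (Zc q N np nq i) := Finset.single_le_sum
        (f := fun v : Fin np => Zc q N np nq i (Sum.inl v)) (fun _ _ => Nat.zero_le _)
        (Finset.mem_univ _)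

theorem cast_val_lt (hnp : np = N * q) {i j : ℕ} (hi : i < N) (hj : j < q) :
    ((i + N * j : ℕ) : Fin np).val = i + N * j := by
  rw [Fin.val_natCast, Nat.mod_eq_of_lt]
  rw [hnp]
  calc i + N * j < N + N * j := by omega
    _ = N * (j + 1) := by ring
    _ ≤ N * q := Nat.mul_le_mul_left N hj

theorem Zc_le (hq : 0 < q) (hN : 0 < N) (hnp : np = N * q) {i : ℕ} (hi : i < N)
    {σ : (Fin np ⊕ Fin nq) →₀ ℕ}
    (hfail : ∀ j < q, σ (Sum.inl ((i + N * j : ℕ) : Fin np)) ≠ 0) :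
    Zc q N np nq i ≤ σ := by
  have hinj : ∀ j1 < q, ∀ j2 < q,
      ((i + N * j1 : ℕ) : Fin np) = ((i + N * j2 : ℕ) : Fin np) → j1 = j2 := by
    intro j1 hj1 j2 hj2 hcon
    have := congrArg Fin.val hcon
    rw [cast_val_lt q N np hnp hi hj1, cast_val_lt q N np hnp hi hj2] at this
    have h2 : N * j1 = N * j2 := by omega
    exact Nat.eq_of_mul_eq_mul_left hN h2
  rw [Finsupp.le_iff]
  intro x hx
  by_cases hex : ∃ j0 ∈ range q, (Sum.inl ((i + N * j0 : ℕ) : Fin np) : Fin np ⊕ Fin nq) = x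
  · obtain ⟨j0, hj0, hj0x⟩ := hex
    have hval : Zc q N np nq i x = 1 := by
      rw [Zc, Finsupp.finset_sum_apply, Finset.sum_eq_single_of_mem j0 hj0]
      · rw [Finsupp.single_apply, if_pos hj0x]
      · intro b hb hbne
        rw [Finsupp.single_apply, if_neg]
        intro hcon
        exact hbne (hinj b (Finset.mem_range.mp hb) j0 (Finset.mem_range.mp hj0)
          (Sum.inl.inj (hcon.trans hj0x.symm)))
    rw [hval, ← hj0x]
    exact Nat.one_le_iff_ne_zero.mpr (hfail j0 (Finset.mem_range.mp hj0))
  · exfalso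
    apply Finsupp.mem_support_iff.mp hx
    rw [Zc, Finsupp.finset_sum_apply]
    apply Finset.sum_eq_zero
    intro j hj
    rw [Finsupp.single_apply, if_neg]
    intro hcon
    exact hex ⟨j, hj, hcon⟩

theorem Zc_inl_apply (hq : 0 < q) (hN : 0 < N) (hnp : np = N * q) {i : ℕ} (hi : i < N)
    (y : Fin np) :
    Zc q N np nq i (Sum.inl y) = if (y : ℕ) % N = i then 1 else 0 := by
  rw [Zc, Finsupp.finset_sum_apply]
  have hcond : ∀ j ∈ range q,
      (Finsupp.single (Sum.inl ((i + N * j : ℕ) : Fin np) : Fin np ⊕ Fin nq) (1 : ℕ))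
        (Sum.inl y) = if i + N * j = (y : ℕ) then 1 else 0 := by
    intro j hj
    rw [Finsupp.single_apply]
    congr 1
    rw [eq_iff_iff]
    constructor
    · intro h
      have h2 := congrArg Fin.val (Sum.inl.inj h)
      rwa [cast_val_lt q N np hnp hi (Finset.mem_range.mp hj)] at h2
    · intro h
      congr 1
      apply Fin.ext
      rw [cast_val_lt q N np hnp hi (Finset.mem_range.mp hj)]
      exact h
  rw [Finset.sum_congr rfl hcond,
    count_eq N q i (y : ℕ) hq hN hi (by rw [← hnp]; exact y.isLt)]

theorem Zc_inr_apply (i : ℕ) (z : Fin nq) : Zc q N np nq i (Sum.inr z) = 0 := by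
  rw [Zc, Finsupp.finset_sum_apply]
  apply Finset.sum_eq_zero
  intro j _
  simp [Finsupp.single_apply]

theorem Wc_inr_apply (hp : 0 < p) (hN : 0 < N) (hnq : nq = N * p) {i : ℕ} (hi : i < N)
    (y : Fin nq) :
    Wc p N np nq i (Sum.inr y) = if (y : ℕ) % N = i then 1 else 0 := by
  rw [Wc, Finsupp.finset_sum_apply]
  have hcond : ∀ j ∈ range p,
      (Finsupp.single (Sum.inr ((i + N * j : ℕ) : Fin nq) : Fin np ⊕ Fin nq) (1 : ℕ))
        (Sum.inr y) = if i + N * j = (y : ℕ) then 1 else 0 := by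
    intro j hj
    rw [Finsupp.single_apply]
    congr 1
    rw [eq_iff_iff]
    constructor
    · intro h
      have h2 := congrArg Fin.val (Sum.inr.inj h)
      rwa [cast_val_lt p N nq hnq hi (Finset.mem_range.mp hj)] at h2
    · intro h
      congr 1
      apply Fin.ext
      rw [cast_val_lt p N nq hnq hi (Finset.mem_range.mp hj)]
      exact h
  rw [Finset.sum_congr rfl hcond,
    count_eq N p i (y : ℕ) hp hN hi (by rw [← hnq]; exact y.isLt)]

theorem cExp_Zc_eq_Wc (hp : 0 < p) (hq : 0 < q) (hN : 0 < N)
    (hnp : np = N * q) (hnq : nq = N * p) (hnpp : np * p = n) (hnqq : nq * q = n)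
    {i : ℕ} (hi : i < N) :
    cExp n p q np nq (Zc q N np nq i) = cExp n p q np nq (Wc p N np nq i) := by
  apply Finsupp.ext
  intro k
  have hk : ((k.val : ℕ) : ZMod n) = k := ZMod.natCast_rightInverse k
  rw [← hk, cExp_apply n p q np nq hp hq hnpp hnqq, cExp_apply n p q np nq hp hq hnpp hnqq,
    Zc_inl_apply q N np nq hq hN hnp hi, Zc_inr_apply q N np nq,
    Wc_inl p N np nq, Wc_inr_apply p N np nq hp hN hnq hi,
    Fin.val_natCast, Fin.val_natCast,
    Nat.mod_mod_of_dvd _ ⟨q, hnp⟩, Nat.mod_mod_of_dvd _ ⟨p, hnq⟩]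
  omega

theorem red (hp : 0 < p) (hq : 0 < q) (hN : 0 < N) (hnp : np = N * q) :
    ∀ (k : ℕ) (σ : (Fin np ⊕ Fin nq) →₀ ℕ), Mz np nq σ ≤ k →
    ∃ G : MvPolynomial (Fin np ⊕ Fin nq) ℂ,
      monomial σ (1 : ℂ) - G ∈ Ideal.span ((fun i => tGen p q N np nq i) '' Set.Iio N)
      ∧ ∀ τ ∈ G.support, normal q N np nq τ := by
  have base : ∀ σ : (Fin np ⊕ Fin nq) →₀ ℕ, normal q N np nq σ →
      ∃ G : MvPolynomial (Fin np ⊕ Fin nq) ℂ,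
        monomial σ (1 : ℂ) - G ∈ Ideal.span ((fun i => tGen p q N np nq i) '' Set.Iio N)
        ∧ ∀ τ ∈ G.support, normal q N np nq τ := by
    intro σ hn
    refine ⟨monomial σ 1, by rw [sub_self]; exact Ideal.zero_mem _, ?_⟩
    intro τ hτ
    rw [support_monomial, if_neg one_ne_zero, Finset.mem_singleton] at hτ
    rwa [hτ]
  intro k
  induction k with
  | zero =>
      intro σ hk
      by_cases hn : normal q N np nq σ
      · exact base σ hn
      · exfalso
        rw [normal] at hn; push_neg at hn
        obtain ⟨i, hiN, hfail⟩ := hn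
        obtain ⟨τ, hτ⟩ := le_iff_exists_add.mp (Zc_le q N np nq hq hN hnp hiN hfail)
        have h1 := Mz_Zc_pos q N np nq hq i
        have h2 : Mz np nq σ = Mz np nq (Zc q N np nq i) + Mz np nq τ := by
          rw [hτ, Mz_add]
        omega
  | succ k ih =>
      intro σ hk
      by_cases hn : normal q N np nq σ
      · exact base σ hn
      · rw [normal] at hn; push_neg at hn
        obtain ⟨i, hiN, hfail⟩ := hn
        obtain ⟨τ, hτ⟩ := le_iff_exists_add.mp (Zc_le q N np nq hq hN hnp hiN hfail)
        have hMz : Mz np nq (τ + Wc p N np nq i) ≤ k := by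
          have h1 := Mz_Zc_pos q N np nq hq i
          have h2 : Mz np nq σ = Mz np nq (Zc q N np nq i) + Mz np nq τ := by
            rw [hτ, Mz_add]
          have h3 := Mz_add np nq τ (Wc p N np nq i)
          have h4 := Mz_Wc p N np nq i
          omega
        obtain ⟨G, hG1, hG2⟩ := ih (τ + Wc p N np nq i) hMz
        refine ⟨G, ?_, hG2⟩
        have hstep : monomial σ (1 : ℂ) - monomial (τ + Wc p N np nq i) 1
            = monomial τ 1 * tGen p q N np nq i := by
          rw [tGen, mul_sub, monomial_mul, monomial_mul, one_mul, hτ,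
            add_comm τ (Zc q N np nq i)]
        have hsplit : monomial σ (1 : ℂ) - G
            = (monomial σ 1 - monomial (τ + Wc p N np nq i) 1)
              + (monomial (τ + Wc p N np nq i) 1 - G) := by ring
        rw [hsplit]
        refine Ideal.add_mem _ ?_ hG1
        rw [hstep]
        exact Ideal.mul_mem_left _ _ (Ideal.subset_span ⟨i, hiN, rfl⟩)

end Main





end Stmt15Aux4


open Stmt15Aux Stmt15Aux2 Stmt15Aux3 Stmt15Aux4 in
/-- Second fundamental theorem: the kernel of
`ρ' : ℂ[z_0,…,z_{n_p-1}, w_0,…,w_{n_q-1}] → ℂ[x_0,…,x_{n-1}]`,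
`z_i ↦ Θ_p(y^(p)_i)`, `w_j ↦ Θ_q(y^(q)_j)`, is generated by
`t_i = ∏_{j<q} z_{i+n_{pq}j} − ∏_{j<p} w_{i+n_{pq}j}` for `0 ≤ i < n_{pq}`. -/
theorem stmt15 (n p q : ℕ) [NeZero n] [NeZero (n / p)] [NeZero (n / q)]
    (hp : 0 < p) (hq : 0 < q) (hco : Nat.Coprime p q) (hpq : p * q ∣ n)
    (ζ : ℂ) (hζ : IsPrimitiveRoot ζ n)
    (ρ' : MvPolynomial (Fin (n / p) ⊕ Fin (n / q)) ℂ →ₐ[ℂ] MvPolynomial (ZMod n) ℂ)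
    (hρ' : ρ' = aeval (Sum.elim
      (fun i : Fin (n / p) => thetaCirc p (fun j => ypVar n p ζ (i : ℕ) j))
      (fun i : Fin (n / q) => thetaCirc q (fun j => ypVar n q ζ (i : ℕ) j))))
    (t : ℕ → MvPolynomial (Fin (n / p) ⊕ Fin (n / q)) ℂ)
    (ht : ∀ i : ℕ, t i
      = ∏ j ∈ Finset.range q, X (Sum.inl ((i + (n / (p * q)) * j : ℕ) : Fin (n / p)))
      - ∏ j ∈ Finset.range p, X (Sum.inr ((i + (n / (p * q)) * j : ℕ) : Fin (n / q)))) :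
    RingHom.ker ρ'.toRingHom = Ideal.span ((fun i : ℕ => t i) '' Set.Iio (n / (p * q))) := by
  classical
  have hn0 : 0 < n := Nat.pos_of_ne_zero (NeZero.ne n)
  obtain ⟨N', hN'⟩ := hpq
  have hpq0 : 0 < p * q := Nat.mul_pos hp hq
  have hN'pos : 0 < N' := by
    rcases Nat.eq_zero_or_pos N' with h | h
    · rw [h, mul_zero] at hN'; omega
    · exact h
  have hNN : n / (p * q) = N' := by rw [hN', Nat.mul_div_cancel_left _ hpq0]
  have hnp' : n / p = q * N' := by
    rw [hN', show p * q * N' = p * (q * N') by ring, Nat.mul_div_cancel_left _ hp]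
  have hnq' : n / q = p * N' := by
    rw [hN', show p * q * N' = q * (p * N') by ring, Nat.mul_div_cancel_left _ hq]
  have hNpos : 0 < n / (p * q) := by rw [hNN]; exact hN'pos
  have hnp : n / p = n / (p * q) * q := by rw [hnp', hNN]; ring
  have hnq : n / q = n / (p * q) * p := by rw [hnq', hNN]; ring
  have hnpp : n / p * p = n := by rw [hnp', hN']; ring
  have hnqq : n / q * q = n := by rw [hnq', hN']; ring
  have hpdvd : p ∣ n := ⟨q * N', by rw [hN']; ring⟩
  have hqdvd : q ∣ n := ⟨p * N', by rw [hN']; ring⟩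
  set ψ : MvPolynomial (Fin (n / p) ⊕ Fin (n / q)) ℂ →ₐ[ℂ] MvPolynomial (ZMod n) ℂ :=
    aeval (psim n p q (n / p) (n / q)) with hψdef
  have hcompEq : ρ' = (Etr n ζ).comp ψ := by
    rw [hρ', hψdef]
    apply MvPolynomial.algHom_ext
    rintro (i | j)
    · rw [aeval_X, AlgHom.comp_apply, aeval_X]
      simp only [Sum.elim_inl]
      have hpsim : psim n p q (n / p) (n / q) (Sum.inl i)
          = ∏ m ∈ Finset.range p, X ((((i : ℕ) + (n / p) * m : ℕ)) : ZMod n) := rfl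
      rw [hpsim, map_prod]
      have hEtr : ∀ m ∈ Finset.range p,
          Etr n ζ (X ((((i : ℕ) + (n / p) * m : ℕ)) : ZMod n))
          = u n ζ ((i : ℕ) + (n / p) * m) := by
        intro m hm
        rw [Etr, aeval_X]
        congr 1
        rw [ZMod.val_natCast, Nat.mod_eq_of_lt]
        have hm' : m < p := Finset.mem_range.mp hm
        have hii := i.isLt
        calc (i : ℕ) + n / p * m < n / p + n / p * m := by omega
          _ = n / p * (m + 1) := by ring
          _ ≤ n / p * p := Nat.mul_le_mul_left _ hm'
          _ = n := hnpp
      rw [Finset.prod_congr rfl hEtr]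
      exact theta_eq hζ hp hpdvd (i : ℕ)
    · rw [aeval_X, AlgHom.comp_apply, aeval_X]
      simp only [Sum.elim_inr]
      have hpsim : psim n p q (n / p) (n / q) (Sum.inr j)
          = ∏ m ∈ Finset.range q, X ((((j : ℕ) + (n / q) * m : ℕ)) : ZMod n) := rfl
      rw [hpsim, map_prod]
      have hEtr : ∀ m ∈ Finset.range q,
          Etr n ζ (X ((((j : ℕ) + (n / q) * m : ℕ)) : ZMod n))
          = u n ζ ((j : ℕ) + (n / q) * m) := by
        intro m hm
        rw [Etr, aeval_X]
        congr 1
        rw [ZMod.val_natCast, Nat.mod_eq_of_lt]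
        have hm' : m < q := Finset.mem_range.mp hm
        have hjj := j.isLt
        calc (j : ℕ) + n / q * m < n / q + n / q * m := by omega
          _ = n / q * (m + 1) := by ring
          _ ≤ n / q * q := Nat.mul_le_mul_left _ hm'
          _ = n := hnqq
      rw [Finset.prod_congr rfl hEtr]
      exact theta_eq hζ hq hqdvd (j : ℕ)
  have hρψ : ∀ F, ρ' F = Etr n ζ (ψ F) := by
    intro F; rw [hcompEq]; rfl
  have htg : ∀ i, t i = tGen p q (n / (p * q)) (n / p) (n / q) i := by
    intro i
    rw [ht i, tGen,
      prod_X_eq_monomial (Finset.range q)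
        (fun j => (Sum.inl ((i + (n / (p * q)) * j : ℕ) : Fin (n / p)) : Fin (n / p) ⊕ Fin (n / q))),
      prod_X_eq_monomial (Finset.range p)
        (fun j => (Sum.inr ((i + (n / (p * q)) * j : ℕ) : Fin (n / q)) : Fin (n / p) ⊕ Fin (n / q)))]
    rfl
  set I : Ideal (MvPolynomial (Fin (n / p) ⊕ Fin (n / q)) ℂ) :=
    Ideal.span ((fun i : ℕ => t i) '' Set.Iio (n / (p * q))) with hI
  have hIeq : I = Ideal.span
      ((fun i => tGen p q (n / (p * q)) (n / p) (n / q) i) '' Set.Iio (n / (p * q))) := by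
    rw [hI, Set.image_congr (fun a _ => htg a)]
  have hψt : ∀ i < n / (p * q), ψ (t i) = 0 := by
    intro i hi
    rw [htg i, tGen, map_sub, hψdef, aeval_psim_monomial, aeval_psim_monomial,
      cExp_Zc_eq_Wc n p q (n / (p * q)) (n / p) (n / q) hp hq hNpos hnp hnq hnpp hnqq hi,
      sub_self]
  have hIker : I ≤ RingHom.ker ψ.toRingHom := by
    rw [hI, Ideal.span_le]
    rintro g ⟨i, hi, rfl⟩
    rw [SetLike.mem_coe, RingHom.mem_ker]
    exact hψt i hi
  apply le_antisymm
  · intro F hF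
    have hρF : ρ' F = 0 := RingHom.mem_ker.mp hF
    have hψF : ψ F = 0 := by
      apply Etr_injective hζ
      rw [map_zero, ← hρψ F]
      exact hρF
    choose Gf hGf1 hGf2 using fun σ : (Fin (n / p) ⊕ Fin (n / q)) →₀ ℕ =>
      red p q (n / (p * q)) (n / p) (n / q) hp hq hNpos hnp
        (Mz (n / p) (n / q) σ) σ le_rfl
    set G : MvPolynomial (Fin (n / p) ⊕ Fin (n / q)) ℂ :=
      ∑ σ ∈ F.support, (F.coeff σ) • Gf σ with hG
    have hFs : F = ∑ σ ∈ F.support, (F.coeff σ) • monomial σ (1 : ℂ) := by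
      conv_lhs => rw [F.as_sum]
      refine Finset.sum_congr rfl fun σ _ => ?_
      rw [smul_monomial, smul_eq_mul, mul_one]
    have hFG : F - G ∈ I := by
      have hFsum : F - G = ∑ σ ∈ F.support, (F.coeff σ) • (monomial σ (1 : ℂ) - Gf σ) := by
        have : ∀ σ ∈ F.support, (F.coeff σ) • (monomial σ (1 : ℂ) - Gf σ)
            = (F.coeff σ) • monomial σ (1 : ℂ) - (F.coeff σ) • Gf σ :=
          fun σ _ => smul_sub _ _ _
        rw [Finset.sum_congr rfl this, Finset.sum_sub_distrib, ← hFs, ← hG]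
      rw [hFsum]
      refine Ideal.sum_mem I fun σ _ => ?_
      rw [smul_eq_C_mul]
      refine Ideal.mul_mem_left I _ ?_
      rw [hIeq]
      exact hGf1 σ
    have hGnorm : ∀ τ ∈ G.support, normal q (n / (p * q)) (n / p) (n / q) τ := by
      intro τ hτ
      rw [hG] at hτ
      obtain ⟨σ, hσmem, hτσ⟩ := Finset.mem_biUnion.mp (MvPolynomial.support_sum hτ)
      exact hGf2 σ τ (MvPolynomial.support_smul hτσ)
    have hψG : ψ G = 0 := by
      have h1 : ψ (F - G) = 0 := RingHom.mem_ker.mp (hIker hFG)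
      have h2 : ψ G = ψ F - ψ (F - G) := by rw [map_sub]; ring
      rw [h2, hψF, h1, sub_zero]
    have hG0 : G = 0 := by
      by_contra hne
      obtain ⟨σ0, hσ0⟩ := Finset.nonempty_iff_ne_empty.mpr
        (fun h => hne (MvPolynomial.support_eq_empty.mp h))
      have hψG2 : ψ G = ∑ σ ∈ G.support,
          monomial (cExp n p q (n / p) (n / q) σ) (G.coeff σ) := by
        conv_lhs => rw [G.as_sum]
        rw [map_sum]
        exact Finset.sum_congr rfl fun σ _ =>
          aeval_psim_monomial n p q (n / p) (n / q) σ (G.coeff σ)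
      have hcf := congrArg (coeff (cExp n p q (n / p) (n / q) σ0)) hψG2
      rw [hψG, coeff_zero, coeff_sum] at hcf
      simp only [coeff_monomial] at hcf
      rw [Finset.sum_eq_single σ0
        (fun σ hσ hne2 => by
          rw [if_neg]
          intro hcexp
          exact hne2 (cExp_inj n p q (n / (p * q)) (n / p) (n / q) hp hq hco hNpos
            hnp hnq hnpp hnqq (hGnorm σ hσ) (hGnorm σ0 hσ0) hcexp))
        (fun h => absurd hσ0 h), if_pos rfl] at hcf
      exact (MvPolynomial.mem_support_iff.mp hσ0) hcf.symm
    have hFG2 : F = F - G := by rw [hG0, sub_zero]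
    rw [hFG2]
    exact hFG
  · rw [hI, Ideal.span_le]
    rintro g ⟨i, hi, rfl⟩
    rw [SetLike.mem_coe, RingHom.mem_ker]
    show ρ' (t i) = 0
    rw [hρψ (t i), hψt i hi, map_zero]
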